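/- Define, for θ > 0, z̃₄(θ) = 30(sinh 2θ − 2θ)⁴(cosh θ)²/(cosh 2θ − 1)⁶ and w̃₂(θ) = 3(sinh 2θ − 2θ)³(cosh θ)/(2(cosh 2θ − 1)⁴(sinh θ)). Then lim_{θ→0⁺} (z̃₄(θ), w̃₂(θ)) = (40/27, 2/9) and lim_{θ→∞} (z̃₄(θ), w̃₂(θ)) = (0, 0). That is, the second-order coefficients of the pressureless k = −1 Friedmann spacetime tend to the corresponding components of the rest point SM₄ = (4/3, 2/3, 40/27, 2/9) as t → 0 and to those of M₄ = (0, 1, 0, 0) as t → ∞. -/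

import Mathlib

open Real Set Filter

/-- Second-order density coefficient of the pressureless `k = −1` Friedmann spacetime. -/
noncomputable def z4F (θ : ℝ) : ℝ :=
  30 * (Real.sinh (2 * θ) - 2 * θ) ^ 4 * (Real.cosh θ) ^ 2 / (Real.cosh (2 * θ) - 1) ^ 6

/-- Second-order velocity coefficient of the pressureless `k = −1` Friedmann spacetime. -/
noncomputable def w2F (θ : ℝ) : ℝ :=
  3 * (Real.sinh (2 * θ) - 2 * θ) ^ 3 * Real.cosh θ /
    (2 * (Real.cosh (2 * θ) - 1) ^ 4 * Real.sinh θ)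

lemma tendsto_sinh_div_self : Tendsto (fun x : ℝ => Real.sinh x / x) (nhdsWithin 0 (Ioi 0)) (nhds 1) := by
  have h := (Real.hasDerivAt_sinh 0)
  rw [hasDerivAt_iff_tendsto_slope] at h
  have h2 : Tendsto (slope Real.sinh 0) (nhdsWithin 0 (Ioi 0)) (nhds 1) := by
    simpa [Real.cosh_zero] using h.mono_left (nhdsWithin_mono 0 (fun x (hx : x ∈ Ioi (0:ℝ)) => ne_of_gt hx))
  refine h2.congr' ?_
  filter_upwards [self_mem_nhdsWithin] with x hx
  simp [slope_def_field, div_eq_iff (ne_of_gt (mem_Ioi.mp hx))]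

lemma hasDerivAt_two_mul (x : ℝ) : HasDerivAt (fun x : ℝ => 2 * x) 2 x := by
  simpa using (hasDerivAt_id x).const_mul 2

lemma tendsto_sinh_sub_div_cube :
    Tendsto (fun θ : ℝ => (Real.sinh (2 * θ) - 2 * θ) / θ ^ 3) (nhdsWithin 0 (Ioi 0))
      (nhds (4 / 3)) := by
  have h2x := hasDerivAt_two_mul
  have t3 : Tendsto (fun x : ℝ => (8 * Real.cosh (2 * x)) / 6) (nhdsWithin 0 (Ioi 0)) (nhds (4/3)) := by
    have : ContinuousAt (fun x : ℝ => (8 * Real.cosh (2 * x)) / 6) 0 := by fun_prop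
    have := tendsto_nhdsWithin_of_tendsto_nhds (s := Ioi 0) this.tendsto
    norm_num at this
    convert this using 2
  have t2 : Tendsto (fun x : ℝ => (4 * Real.sinh (2 * x)) / (6 * x)) (nhdsWithin 0 (Ioi 0)) (nhds (4/3)) := by
    apply HasDerivAt.lhopital_zero_right_on_Ioo (a := 0) (b := 1)
      (f' := fun x => 8 * Real.cosh (2 * x)) (g' := fun _ => 6) one_pos
    · intro x _
      have := ((Real.hasDerivAt_sinh (2*x)).comp x (h2x x)).const_mul 4
      exact this.congr_deriv (by ring)
    · intro x _
      simpa using (hasDerivAt_id x).const_mul 6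
    · intro x _; norm_num
    · have : ContinuousAt (fun x : ℝ => 4 * Real.sinh (2 * x)) 0 := by fun_prop
      have := tendsto_nhdsWithin_of_tendsto_nhds (s := Ioi 0) this.tendsto
      simpa using this
    · have : ContinuousAt (fun x : ℝ => 6 * x) 0 := by fun_prop
      have := tendsto_nhdsWithin_of_tendsto_nhds (s := Ioi 0) this.tendsto
      simpa using this
    · exact t3
  have t1 : Tendsto (fun x : ℝ => (2 * Real.cosh (2 * x) - 2) / (3 * x ^ 2)) (nhdsWithin 0 (Ioi 0)) (nhds (4/3)) := by
    apply HasDerivAt.lhopital_zero_right_on_Ioo (a := 0) (b := 1)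
      (f' := fun x => 4 * Real.sinh (2 * x)) (g' := fun x => 6 * x) one_pos
    · intro x _
      have := (((Real.hasDerivAt_cosh (2*x)).comp x (h2x x)).const_mul 2).sub_const 2
      exact this.congr_deriv (by ring)
    · intro x _
      have := (hasDerivAt_pow 2 x).const_mul 3
      exact this.congr_deriv (by push_cast; ring)
    · intro x hx; have := hx.1; positivity
    · have : ContinuousAt (fun x : ℝ => 2 * Real.cosh (2 * x) - 2) 0 := by fun_prop
      have := tendsto_nhdsWithin_of_tendsto_nhds (s := Ioi 0) this.tendsto
      simpa using this
    · have : ContinuousAt (fun x : ℝ => 3 * x ^ 2) 0 := by fun_prop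
      have := tendsto_nhdsWithin_of_tendsto_nhds (s := Ioi 0) this.tendsto
      simpa using this
    · exact t2
  apply HasDerivAt.lhopital_zero_right_on_Ioo (a := 0) (b := 1)
    (f' := fun x => 2 * Real.cosh (2 * x) - 2) (g' := fun x => 3 * x ^ 2) one_pos
  · intro x _
    have := ((Real.hasDerivAt_sinh (2*x)).comp x (h2x x)).sub (h2x x)
    exact this.congr_deriv (by ring)
  · intro x _
    simpa using hasDerivAt_pow 3 x
  · intro x hx; have := hx.1; positivity
  · have : ContinuousAt (fun x : ℝ => Real.sinh (2 * x) - 2 * x) 0 := by fun_prop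
    have := tendsto_nhdsWithin_of_tendsto_nhds (s := Ioi 0) this.tendsto
    simpa using this
  · have : ContinuousAt (fun x : ℝ => x ^ 3) 0 := by fun_prop
    have := tendsto_nhdsWithin_of_tendsto_nhds (s := Ioi 0) this.tendsto
    simpa using this
  · exact t1

lemma cosh_two_sub_one (t : ℝ) : Real.cosh (2 * t) - 1 = 2 * Real.sinh t ^ 2 := by
  rw [Real.cosh_two_mul, Real.cosh_sq]; ring

lemma z4F_zero_limit : Tendsto z4F (nhdsWithin 0 (Ioi 0)) (nhds (40 / 27)) := by
  have hnum : Tendsto (fun t : ℝ => 30 * ((Real.sinh (2*t) - 2*t) / t^3) ^ 4 * Real.cosh t ^ 2)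
      (nhdsWithin 0 (Ioi 0)) (nhds (30 * (4/3 : ℝ) ^ 4 * 1)) := by
    have hc : Tendsto (fun t : ℝ => Real.cosh t ^ 2) (nhdsWithin 0 (Ioi 0)) (nhds 1) := by
      have : ContinuousAt (fun t : ℝ => Real.cosh t ^ 2) 0 := by fun_prop
      have := tendsto_nhdsWithin_of_tendsto_nhds (s := Ioi 0) this.tendsto
      simpa using this
    exact ((tendsto_sinh_sub_div_cube.pow 4).const_mul 30).mul hc
  have hden : Tendsto (fun t : ℝ => 64 * (Real.sinh t / t) ^ 12)
      (nhdsWithin 0 (Ioi 0)) (nhds (64 * (1:ℝ) ^ 12)) :=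
    (tendsto_sinh_div_self.pow 12).const_mul 64
  have h := hnum.div hden (by norm_num)
  have heq : ∀ᶠ t in nhdsWithin (0:ℝ) (Ioi 0),
      (30 * ((Real.sinh (2*t) - 2*t) / t^3) ^ 4 * Real.cosh t ^ 2) /
        (64 * (Real.sinh t / t) ^ 12) = z4F t := by
    filter_upwards [self_mem_nhdsWithin] with t ht
    have ht0 : t ≠ 0 := ne_of_gt (mem_Ioi.mp ht)
    have hs : Real.sinh t ≠ 0 := ne_of_gt (Real.sinh_pos_iff.mpr (mem_Ioi.mp ht))
    rw [z4F, cosh_two_sub_one]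
    field_simp
    ring
  have h2 := h.congr' heq
  convert h2 using 2
  norm_num

lemma w2F_zero_limit : Tendsto w2F (nhdsWithin 0 (Ioi 0)) (nhds (2 / 9)) := by
  have hnum : Tendsto (fun t : ℝ => 3 * ((Real.sinh (2*t) - 2*t) / t^3) ^ 3 * Real.cosh t)
      (nhdsWithin 0 (Ioi 0)) (nhds (3 * (4/3 : ℝ) ^ 3 * 1)) := by
    have hc : Tendsto (fun t : ℝ => Real.cosh t) (nhdsWithin 0 (Ioi 0)) (nhds 1) := by
      have : ContinuousAt Real.cosh 0 := by fun_prop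
      have := tendsto_nhdsWithin_of_tendsto_nhds (s := Ioi 0) this.tendsto
      simpa using this
    exact ((tendsto_sinh_sub_div_cube.pow 3).const_mul 3).mul hc
  have hden : Tendsto (fun t : ℝ => 32 * (Real.sinh t / t) ^ 9)
      (nhdsWithin 0 (Ioi 0)) (nhds (32 * (1:ℝ) ^ 9)) :=
    (tendsto_sinh_div_self.pow 9).const_mul 32
  have h := hnum.div hden (by norm_num)
  have heq : ∀ᶠ t in nhdsWithin (0:ℝ) (Ioi 0),
      (3 * ((Real.sinh (2*t) - 2*t) / t^3) ^ 3 * Real.cosh t) /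
        (32 * (Real.sinh t / t) ^ 9) = w2F t := by
    filter_upwards [self_mem_nhdsWithin] with t ht
    have ht0 : t ≠ 0 := ne_of_gt (mem_Ioi.mp ht)
    have hs : Real.sinh t ≠ 0 := ne_of_gt (Real.sinh_pos_iff.mpr (mem_Ioi.mp ht))
    rw [w2F, cosh_two_sub_one]
    field_simp
    ring
  have h2 := h.congr' heq
  convert h2 using 2
  norm_num

lemma bounds_atTop {t : ℝ} (ht : 1 ≤ t) :
    (0 ≤ z4F t ∧ z4F t ≤ 480 / t ^ 2) ∧ (0 ≤ w2F t ∧ w2F t ≤ 12 / t ^ 2) := by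
  have ht0 : (0:ℝ) < t := lt_of_lt_of_le one_pos ht
  have hs : 0 < Real.sinh t := Real.sinh_pos_iff.mpr ht0
  have hts : t < Real.sinh t := Real.self_lt_sinh_iff.mpr ht0
  have hc0 : 0 < Real.cosh t := Real.cosh_pos t
  have hcs : Real.cosh t ≤ 2 * Real.sinh t := by
    have h1 : Real.cosh t - Real.sinh t = Real.exp (-t) := Real.cosh_sub_sinh t
    have h2 : Real.exp (-t) ≤ 1 := Real.exp_le_one_iff.mpr (by linarith)
    linarith
  have hA0 : 0 ≤ Real.sinh (2*t) - 2*t := by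
    have := Real.self_lt_sinh_iff.mpr (show (0:ℝ) < 2*t by linarith)
    linarith
  have hA2 : Real.sinh (2*t) - 2*t ≤ 2 * Real.sinh t * Real.cosh t := by
    rw [Real.sinh_two_mul]; linarith
  have hden : Real.cosh (2*t) - 1 = 2 * Real.sinh t ^ 2 := cosh_two_sub_one t
  set s := Real.sinh t with hsdef
  set c := Real.cosh t with hcdef
  set A := Real.sinh (2*t) - 2*t with hAdef
  have hz : z4F t = 30 * A ^ 4 * c ^ 2 / (2 * s ^ 2) ^ 6 := by
    rw [z4F, hden]
  have hw : w2F t = 3 * A ^ 3 * c / (2 * (2 * s ^ 2) ^ 4 * s) := by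
    rw [w2F, hden]
  have hspos6 : (0:ℝ) < (2 * s ^ 2) ^ 6 := by positivity
  have hspos4 : (0:ℝ) < 2 * (2 * s ^ 2) ^ 4 * s := by positivity
  have hznn : 0 ≤ z4F t := by
    rw [hz]; positivity
  have hwnn : 0 ≤ w2F t := by
    rw [hw]; positivity
  have hts' : t ≤ s := hts.le
  constructor
  · refine ⟨hznn, ?_⟩
    have h1 : z4F t ≤ 480 / s ^ 2 := by
      rw [hz, div_le_div_iff₀ hspos6 (by positivity)]
      nlinarith [mul_le_mul_of_nonneg_right (pow_le_pow_left₀ hA0 hA2 4)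
          (by positivity : (0:ℝ) ≤ c^2*s^2),
        mul_le_mul_of_nonneg_right (pow_le_pow_left₀ hc0.le hcs 6)
          (by positivity : (0:ℝ) ≤ s^6)]
    refine h1.trans ?_
    apply div_le_div_of_nonneg_left (by norm_num) (by positivity)
    exact pow_le_pow_left₀ ht0.le hts' 2
  · refine ⟨hwnn, ?_⟩
    have h1 : w2F t ≤ 12 / s ^ 2 := by
      rw [hw, div_le_div_iff₀ hspos4 (by positivity)]
      nlinarith [mul_le_mul_of_nonneg_right (pow_le_pow_left₀ hA0 hA2 3)
          (by positivity : (0:ℝ) ≤ c*s^2),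
        mul_le_mul_of_nonneg_right (pow_le_pow_left₀ hc0.le hcs 4)
          (by positivity : (0:ℝ) ≤ s^5)]
    refine h1.trans ?_
    apply div_le_div_of_nonneg_left (by norm_num) (by positivity)
    exact pow_le_pow_left₀ ht0.le hts' 2

lemma z4F_atTop : Tendsto z4F atTop (nhds 0) := by
  have hb : Tendsto (fun t : ℝ => 480 / t ^ 2) atTop (nhds 0) :=
    Tendsto.div_atTop tendsto_const_nhds (tendsto_pow_atTop (by norm_num))
  refine tendsto_of_tendsto_of_tendsto_of_le_of_le' tendsto_const_nhds hb ?_ ?_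
  · filter_upwards [eventually_ge_atTop (1:ℝ)] with t ht
    exact ((bounds_atTop ht).1).1
  · filter_upwards [eventually_ge_atTop (1:ℝ)] with t ht
    exact ((bounds_atTop ht).1).2

lemma w2F_atTop : Tendsto w2F atTop (nhds 0) := by
  have hb : Tendsto (fun t : ℝ => 12 / t ^ 2) atTop (nhds 0) :=
    Tendsto.div_atTop tendsto_const_nhds (tendsto_pow_atTop (by norm_num))
  refine tendsto_of_tendsto_of_tendsto_of_le_of_le' tendsto_const_nhds hb ?_ ?_
  · filter_upwards [eventually_ge_atTop (1:ℝ)] with t ht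
    exact ((bounds_atTop ht).2).1
  · filter_upwards [eventually_ge_atTop (1:ℝ)] with t ht
    exact ((bounds_atTop ht).2).2

theorem k_neg_second_order_limits :
    Tendsto (fun θ => (z4F θ, w2F θ)) (nhdsWithin 0 (Ioi 0))
      (nhds ((40 / 27 : ℝ), (2 / 9 : ℝ))) ∧
    Tendsto (fun θ => (z4F θ, w2F θ)) atTop (nhds ((0 : ℝ), (0 : ℝ))) := by
  exact ⟨z4F_zero_limit.prodMk_nhds w2F_zero_limit, z4F_atTop.prodMk_nhds w2F_atTop⟩
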